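/- Let K₁ > 0 and C₁₁₁ ≠ 0 be real constants. Let u¹, u⁴ : ℝ×ℝ → ℝ be differentiable functions satisfying ∂_t u¹ + ∂_x u⁴ = 0 and ∂_t u⁴ + (K₁ + 6C₁₁₁·u¹)·∂_x u¹ = 0 at every point, and suppose K₁ + 6C₁₁₁·u¹(x,t) > 0 for all (x,t). Define m¹ = u⁴ + ( (K₁+6C₁₁₁·u¹)^{3/2} − K₁^{3/2} )/(9C₁₁₁) and m⁴ = u⁴ − ( (K₁+6C₁₁₁·u¹)^{3/2} − K₁^{3/2} )/(9C₁₁₁). Then at every point: ∂_t m¹ + √(K₁+6C₁₁₁·u¹)·∂_x m¹ = 0 and ∂_t m⁴ − √(K₁+6C₁₁₁·u¹)·∂_x m⁴ = 0. -/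

import Mathlib

/-- Riemann invariant transport law (equation (4.44)) for one polarization of
the decoupled plane-wave crystal system: `m¹` and `m⁴` are constant along the
characteristics of speed `±√(K₁+6C₁₁₁u¹)`. -/
theorem riemann_invariant_transport
    (K₁ C111 : ℝ) (hK₁ : 0 < K₁) (hC : C111 ≠ 0)
    (u1 u4 : ℝ → ℝ → ℝ)
    (hu1t : ∀ x t : ℝ, DifferentiableAt ℝ (fun s => u1 x s) t)
    (hu1x : ∀ x t : ℝ, DifferentiableAt ℝ (fun y => u1 y t) x)
    (hu4t : ∀ x t : ℝ, DifferentiableAt ℝ (fun s => u4 x s) t)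
    (hu4x : ∀ x t : ℝ, DifferentiableAt ℝ (fun y => u4 y t) x)
    (hpos : ∀ x t : ℝ, 0 < K₁ + 6 * C111 * u1 x t)
    (hpde1 : ∀ x t : ℝ, deriv (fun s => u1 x s) t + deriv (fun y => u4 y t) x = 0)
    (hpde2 : ∀ x t : ℝ, deriv (fun s => u4 x s) t +
      (K₁ + 6 * C111 * u1 x t) * deriv (fun y => u1 y t) x = 0) :
    ∀ x t : ℝ,
      (deriv (fun s => u4 x s +
          ((K₁ + 6 * C111 * u1 x s) ^ ((3:ℝ)/2) - K₁ ^ ((3:ℝ)/2)) / (9 * C111)) t +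
        Real.sqrt (K₁ + 6 * C111 * u1 x t) *
          deriv (fun y => u4 y t +
            ((K₁ + 6 * C111 * u1 y t) ^ ((3:ℝ)/2) - K₁ ^ ((3:ℝ)/2)) / (9 * C111)) x
        = 0) ∧
      (deriv (fun s => u4 x s -
          ((K₁ + 6 * C111 * u1 x s) ^ ((3:ℝ)/2) - K₁ ^ ((3:ℝ)/2)) / (9 * C111)) t -
        Real.sqrt (K₁ + 6 * C111 * u1 x t) *
          deriv (fun y => u4 y t -
            ((K₁ + 6 * C111 * u1 y t) ^ ((3:ℝ)/2) - K₁ ^ ((3:ℝ)/2)) / (9 * C111)) x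
        = 0) := by

  intro x t
  set a : ℝ := K₁ + 6 * C111 * u1 x t with ha
  have hapos : 0 < a := hpos x t
  -- derivatives
  have h1t := (hu1t x t).hasDerivAt
  have h1x := (hu1x x t).hasDerivAt
  have h4t := (hu4t x t).hasDerivAt
  have h4x := (hu4x x t).hasDerivAt
  set pt : ℝ := deriv (fun s => u1 x s) t
  set px : ℝ := deriv (fun y => u1 y t) x
  set qt : ℝ := deriv (fun s => u4 x s) t
  set qx : ℝ := deriv (fun y => u4 y t) x
  have hgt : HasDerivAt (fun s => K₁ + 6 * C111 * u1 x s) (6 * C111 * pt) t :=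
    ((h1t.const_mul (6 * C111)).const_add K₁)
  have hgx : HasDerivAt (fun y => K₁ + 6 * C111 * u1 y t) (6 * C111 * px) x :=
    ((h1x.const_mul (6 * C111)).const_add K₁)
  have hrpow : ∀ (g : ℝ → ℝ) (g' z : ℝ), HasDerivAt g g' z → 0 < g z →
      HasDerivAt (fun s => (g s) ^ ((3:ℝ)/2))
        ((3/2) * Real.sqrt (g z) * g') z := by
    intro g g' z hg hgz
    have := (Real.hasDerivAt_rpow_const (p := (3:ℝ)/2) (Or.inl hgz.ne')).comp z hg
    refine this.congr_deriv ?_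
    rw [Real.sqrt_eq_rpow]
    norm_num
    try ring
  have hmt : HasDerivAt (fun s => u4 x s +
      ((K₁ + 6 * C111 * u1 x s) ^ ((3:ℝ)/2) - K₁ ^ ((3:ℝ)/2)) / (9 * C111))
      (qt + ((3/2) * Real.sqrt a * (6 * C111 * pt)) / (9 * C111)) t :=
    h4t.add (((hrpow _ _ _ hgt hapos).sub_const _).div_const _)
  have hmx : HasDerivAt (fun y => u4 y t +
      ((K₁ + 6 * C111 * u1 y t) ^ ((3:ℝ)/2) - K₁ ^ ((3:ℝ)/2)) / (9 * C111))
      (qx + ((3/2) * Real.sqrt a * (6 * C111 * px)) / (9 * C111)) x :=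
    h4x.add (((hrpow _ _ _ hgx hapos).sub_const _).div_const _)
  have hnt : HasDerivAt (fun s => u4 x s -
      ((K₁ + 6 * C111 * u1 x s) ^ ((3:ℝ)/2) - K₁ ^ ((3:ℝ)/2)) / (9 * C111))
      (qt - ((3/2) * Real.sqrt a * (6 * C111 * pt)) / (9 * C111)) t :=
    h4t.sub (((hrpow _ _ _ hgt hapos).sub_const _).div_const _)
  have hnx : HasDerivAt (fun y => u4 y t -
      ((K₁ + 6 * C111 * u1 y t) ^ ((3:ℝ)/2) - K₁ ^ ((3:ℝ)/2)) / (9 * C111))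
      (qx - ((3/2) * Real.sqrt a * (6 * C111 * px)) / (9 * C111)) x :=
    h4x.sub (((hrpow _ _ _ hgx hapos).sub_const _).div_const _)
  have hsimp : ((3:ℝ)/2) * Real.sqrt a * (6 * C111 * pt) / (9 * C111)
      = Real.sqrt a * pt := by field_simp; ring
  have hsimp' : ((3:ℝ)/2) * Real.sqrt a * (6 * C111 * px) / (9 * C111)
      = Real.sqrt a * px := by field_simp; ring
  have hsq : Real.sqrt a * Real.sqrt a = a := Real.mul_self_sqrt hapos.le
  have e1 := hpde1 x t
  have e2 := hpde2 x t
  rw [hmt.deriv, hmx.deriv, hnt.deriv, hnx.deriv]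
  rw [hsimp, hsimp']
  constructor
  · have : pt = -qx := by linarith
    have h2 : qt = -(a * px) := by rw [← ha] at e2; linarith
    rw [this, h2]
    linear_combination px * hsq
  · have : pt = -qx := by linarith
    have h2 : qt = -(a * px) := by rw [← ha] at e2; linarith
    rw [this, h2]
    linear_combination px * hsq
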